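/- For ε > 0, v > 0, u ∈ ℝ, along any curve v = v(u) with dv/du = 2v₀/(u₀ - √(u₀² + 4εv₀)) constant (the 1-rarefaction line through (u₀,v₀)), the characteristic root λ₁^ε(u,v) = u + (u - √(u²+4εv))/2 satisfies dλ₁^ε/du = 2; similarly along the 2-rarefaction line through (u₀,v₀), λ₂^ε(u,v) = u + (u + √(u²+4εv))/2 satisfies dλ₂^ε/du = 2. -/

import Mathlib

theorem lambda_deriv_along_rarefaction (ε u0 v0 u : ℝ) (hε : 0 < ε) (hv0 : 0 < v0)
    (hv1 : 0 < v0 + (2 * v0 / (u0 - Real.sqrt (u0 ^ 2 + 4 * ε * v0))) * (u - u0))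
    (hv2 : 0 < v0 + (2 * v0 / (u0 + Real.sqrt (u0 ^ 2 + 4 * ε * v0))) * (u - u0)) :
    HasDerivAt (fun u : ℝ =>
      u + (u - Real.sqrt (u ^ 2 + 4 * ε *
        (v0 + (2 * v0 / (u0 - Real.sqrt (u0 ^ 2 + 4 * ε * v0))) * (u - u0)))) / 2)
      2 u ∧
    HasDerivAt (fun u : ℝ =>
      u + (u + Real.sqrt (u ^ 2 + 4 * ε *
        (v0 + (2 * v0 / (u0 + Real.sqrt (u0 ^ 2 + 4 * ε * v0))) * (u - u0)))) / 2)
      2 u := by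
  set s := Real.sqrt (u0 ^ 2 + 4 * ε * v0) with hs_def
  have harg : 0 < u0 ^ 2 + 4 * ε * v0 := by positivity
  have hs2 : s ^ 2 = u0 ^ 2 + 4 * ε * v0 := Real.sq_sqrt harg.le
  have hs_pos : 0 < s := Real.sqrt_pos.mpr harg
  have hlt1 : u0 - s < 0 := by nlinarith [sq_nonneg (u0 - s), sq_nonneg (u0 + s)]
  have hgt2 : 0 < u0 + s := by nlinarith [sq_nonneg (u0 - s), sq_nonneg (u0 + s)]
  have hne1 : u0 - s ≠ 0 := ne_of_lt hlt1
  have hne2 : u0 + s ≠ 0 := ne_of_gt hgt2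
  constructor
  · have hu : u < (u0 + s) / 2 := by
      have h : 2 * v0 / (u0 - s) = -(u0 + s) / (2 * ε) := by
        rw [div_eq_div_iff hne1 (by positivity)]
        nlinarith
      rw [h] at hv1
      have h2 : 0 < (2 * ε) * (v0 + -(u0 + s) / (2 * ε) * (u - u0)) := by positivity
      have h3 : (2 * ε) * (v0 + -(u0 + s) / (2 * ε) * (u - u0))
          = 2 * ε * v0 - (u0 + s) * (u - u0) := by field_simp; ring
      rw [h3] at h2
      nlinarith
    have heq : (fun x : ℝ =>
        x + (x - Real.sqrt (x ^ 2 + 4 * ε * (v0 + (2 * v0 / (u0 - s)) * (x - u0)))) / 2)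
        =ᶠ[nhds u] (fun x : ℝ => 2 * x - (u0 + s) / 2) := by
      filter_upwards [eventually_lt_nhds hu] with x hx
      have hkey : x ^ 2 + 4 * ε * (v0 + (2 * v0 / (u0 - s)) * (x - u0))
          = (u0 + s - x) ^ 2 := by
        field_simp
        nlinarith [hs2]
      rw [hkey, Real.sqrt_sq (by linarith : (0:ℝ) ≤ u0 + s - x)]
      ring
    have hlin : HasDerivAt (fun x : ℝ => 2 * x - (u0 + s) / 2) 2 u := by
      simpa using (((hasDerivAt_id u).const_mul (2:ℝ)).sub_const ((u0 + s) / 2))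
    exact hlin.congr_of_eventuallyEq heq
  · have hu : (u0 - s) / 2 < u := by
      have h : 2 * v0 / (u0 + s) = (s - u0) / (2 * ε) := by
        rw [div_eq_div_iff hne2 (by positivity)]
        nlinarith
      rw [h] at hv2
      have h2 : 0 < (2 * ε) * (v0 + (s - u0) / (2 * ε) * (u - u0)) := by positivity
      have h3 : (2 * ε) * (v0 + (s - u0) / (2 * ε) * (u - u0))
          = 2 * ε * v0 + (s - u0) * (u - u0) := by field_simp
      rw [h3] at h2
      nlinarith
    have heq : (fun x : ℝ =>
        x + (x + Real.sqrt (x ^ 2 + 4 * ε * (v0 + (2 * v0 / (u0 + s)) * (x - u0)))) / 2)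
        =ᶠ[nhds u] (fun x : ℝ => 2 * x - (u0 - s) / 2) := by
      filter_upwards [eventually_gt_nhds hu] with x hx
      have hkey : x ^ 2 + 4 * ε * (v0 + (2 * v0 / (u0 + s)) * (x - u0))
          = (x - (u0 - s)) ^ 2 := by
        field_simp
        nlinarith [hs2]
      rw [hkey, Real.sqrt_sq (by linarith : (0:ℝ) ≤ x - (u0 - s))]
      ring
    have hlin : HasDerivAt (fun x : ℝ => 2 * x - (u0 - s) / 2) 2 u := by
      simpa using (((hasDerivAt_id u).const_mul (2:ℝ)).sub_const ((u0 - s) / 2))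
    exact hlin.congr_of_eventuallyEq heq
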